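/- Let C be a longest cycle of a graph G, and let u, v be two vertices of G not on C. Then |C| ≥ 2·|N_C(u) ∪ N_C(v)| − 2, where N_C(x) denotes the set of neighbors of x lying on C. -/

import Mathlib

open SimpleGraph

/-- `G` contains `H` as a (not necessarily induced) subgraph. -/
def Contains {V W : Type*} (G : SimpleGraph V) (H : SimpleGraph W) : Prop :=
  ∃ f : H →g G, Function.Injective f

/-- `G` has a cycle with `m` vertices (equivalently, of length `m`). -/
def HasCycleLength {V : Type*} (G : SimpleGraph V) (m : ℕ) : Prop :=
  ∃ (v : V) (c : G.Walk v v), c.IsCycle ∧ c.length = m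

/-- The Ramsey property for `K_{a,b}` versus the cycle `C_m`: every graph `Γ` on `N` vertices
contains `K_{a,b}`, or its complement contains a cycle of length `m`. -/
def RamseyProp (a b m N : ℕ) : Prop :=
  ∀ Γ : SimpleGraph (Fin N),
    Contains Γ (completeBipartiteGraph (Fin a) (Fin b)) ∨ HasCycleLength Γᶜ m

/-- `G` is `k`-connected. -/
def IsKConnected {V : Type*} [Fintype V] (k : ℕ) (G : SimpleGraph V) : Prop :=
  k < Fintype.card V ∧
    ∀ S : Finset V, S.card < k → (G.induce ((↑S : Set V)ᶜ)).Connected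

/-- The circumference of `G`: the length of a longest cycle. -/
noncomputable def circumference {V : Type*} (G : SimpleGraph V) : ℕ :=
  sSup {m | HasCycleLength G m}

namespace CycleAux

variable {V : Type*} {G : SimpleGraph V}

/-- A path along `f a, f (a+1), ..., f (a+k)`. -/
def pathSeg (f : ℕ → V) (hadj : ∀ i, G.Adj (f i) (f (i+1))) (a : ℕ) :
    (k : ℕ) → G.Walk (f a) (f (a + k))
  | 0 => Walk.nil
  | k+1 => (pathSeg f hadj a k).concat (hadj (a+k))

variable {f : ℕ → V} (hadj : ∀ i, G.Adj (f i) (f (i+1)))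

@[simp] lemma pathSeg_length (a k : ℕ) : (pathSeg f hadj a k).length = k := by
  induction k with
  | zero => rfl
  | succ k ih => simp [pathSeg, Walk.length_concat, ih]

lemma pathSeg_support (a k : ℕ) :
    (pathSeg f hadj a k).support = (List.range (k+1)).map (fun t => f (a + t)) := by
  induction k with
  | zero => simp [pathSeg, List.range_succ]
  | succ k ih =>
      simp only [pathSeg, Walk.support_concat, ih, List.range_succ, List.map_append,
        List.concat_eq_append, List.map_cons, List.map_nil]

variable {n : ℕ} (hn : 3 ≤ n) (hper : ∀ i, f (i + n) = f i)
  (hinj : ∀ i j, i < n → j < n → f i = f j → i = j)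

include hn hper in
lemma f_mod (i : ℕ) : f i = f (i % n) := by
  induction i using Nat.strong_induction_on with
  | _ i ih =>
    rcases lt_or_ge i n with h | h
    · rw [Nat.mod_eq_of_lt h]
    · have h1 : i = (i - n) + n := by omega
      rw [h1, hper, ih (i - n) (by omega)]
      congr 1
      conv_lhs => rw [← Nat.add_mod_right (i-n) n]

include hn hper hinj in
lemma f_modeq {x y : ℕ} (h : f x = f y) : x % n = y % n := by
  rw [f_mod hn hper x, f_mod hn hper y] at h
  exact hinj _ _ (Nat.mod_lt _ (by omega)) (Nat.mod_lt _ (by omega)) h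

include hn hper hinj in
lemma f_add_cancel {a x y : ℕ} (hx : x ≤ n) (hy : y ≤ n) (h : f (a + x) = f (a + y)) :
    x = n ∧ y = 0 ∨ x = 0 ∧ y = n ∨ x = y := by
  have h1 : x % n = y % n := by
    have := f_modeq hn hper hinj h
    have h2 : x ≡ y [MOD n] := Nat.ModEq.add_left_cancel' a this
    exact h2
  rcases eq_or_lt_of_le hx with rfl | hx
  · rcases eq_or_lt_of_le hy with rfl | hy
    · right; right; rfl
    · left
      rw [Nat.mod_self, Nat.mod_eq_of_lt hy] at h1
      omega
  · rcases eq_or_lt_of_le hy with rfl | hy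
    · right; left
      rw [Nat.mod_self, Nat.mod_eq_of_lt hx] at h1
      omega
    · right; right
      rwa [Nat.mod_eq_of_lt hx, Nat.mod_eq_of_lt hy] at h1

include hn hper hinj in
lemma f_add_ne {a x y : ℕ} (hx : x ≤ n) (hy : y ≤ n) (hne : x ≠ y)
    (hne2 : ¬ (x = n ∧ y = 0)) (hne3 : ¬ (x = 0 ∧ y = n)) : f (a + x) ≠ f (a + y) := by
  intro h
  rcases f_add_cancel hn hper hinj hx hy h with h | h | h <;> tauto

include hn hper hinj in
lemma pathSeg_support_nodup (a : ℕ) {k : ℕ} (hk : k < n) :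
    (pathSeg f hadj a k).support.Nodup := by
  rw [pathSeg_support]
  refine List.Nodup.map_on ?_ List.nodup_range
  intro x hx y hy hxy
  simp only [List.mem_range] at hx hy
  rcases f_add_cancel hn hper hinj (x := x) (y := y) (by omega) (by omega) hxy with h | h | h <;>
    omega

lemma mem_pathSeg_support {a k : ℕ} {x : V} :
    x ∈ (pathSeg f hadj a k).support ↔ ∃ t ≤ k, x = f (a + t) := by
  simp [pathSeg_support, List.mem_map, List.mem_range, Nat.lt_succ_iff, eq_comm]

variable {u v : V} (hu : ∀ i, f i ≠ u) (hv : ∀ i, f i ≠ v)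
  (hmaxn : ∀ (x : V) (c' : G.Walk x x), c'.IsCycle → c'.length ≤ n)

include hadj hn hper hinj hu hmaxn in
/-- If `f i` and `f (i+1)` are both adjacent to the outside vertex `u`,
we get a longer cycle; contradiction. -/
lemma no_uu (i : ℕ) (h1 : G.Adj u (f i)) (h2 : G.Adj u (f (i+1))) : False := by
  have e1 : f (i + 1 + (n-1)) = f i := by
    rw [show i + 1 + (n-1) = i + n by omega, hper]
  let seg : G.Walk (f (i+1)) (f i) := (pathSeg f hadj (i+1) (n-1)).copy rfl e1
  let Q : G.Walk (f (i+1)) u := seg.concat h1.symm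
  let W : G.Walk u u := Walk.cons h2 Q
  have hunotin : u ∉ seg.support := by
    simp only [seg, Walk.support_copy, mem_pathSeg_support]
    rintro ⟨t, ht, hteq⟩
    exact hu _ hteq.symm
  have hWc : W.IsCycle := by
    rw [Walk.cons_isCycle_iff]
    constructor
    · apply Walk.IsPath.mk'
      rw [Walk.support_concat, List.nodup_append]
      refine ⟨?_, List.nodup_singleton _, ?_⟩
      · simpa only [seg, Walk.support_copy] using
          pathSeg_support_nodup hadj hn hper hinj (i+1) (by omega)
      · intro x hx y hy hxy
        rw [List.mem_singleton] at hy
        subst hy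
        rw [hxy] at hx
        exact hunotin hx
    · intro hmem
      rw [Walk.edges_concat, List.concat_eq_append, List.mem_append, List.mem_singleton] at hmem
      rcases hmem with hmem | hmem
      · exact hunotin (Walk.fst_mem_support_of_mem_edges _ hmem)
      · rw [Sym2.eq_iff] at hmem
        rcases hmem with ⟨h3, h4⟩ | ⟨h3, h4⟩
        · exact hu _ h3.symm
        · have := f_add_cancel hn hper hinj (a := i) (x := 1) (y := 0) (by omega) (by omega) h4
          omega
  have := hmaxn u W hWc
  have : W.length = n + 1 := by
    simp [W, Q, seg, Walk.length_concat]
    omega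
  omega

include hadj hn hper hinj hu hv hmaxn in
/-- Two distinct "u-then-v" consecutive pairs on the cycle give a longer cycle. -/
lemma no_uvuv (huv : u ≠ v) {a d : ℕ} (hd1 : 1 ≤ d) (hd2 : d ≤ n - 1)
    (h1 : G.Adj u (f a)) (h2 : G.Adj v (f (a+1)))
    (h3 : G.Adj u (f (a+d))) (h4 : G.Adj v (f (a+d+1))) : False := by
  have e1 : f (a+d+1 + (n-1-d)) = f a := by
    rw [show a+d+1 + (n-1-d) = a + n by omega, hper]
  have e2 : f (a+1 + (d-1)) = f (a+d) := by
    rw [show a+1 + (d-1) = a + d by omega]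
  let seg1 : G.Walk (f (a+d+1)) (f a) := (pathSeg f hadj (a+d+1) (n-1-d)).copy rfl e1
  let seg2 : G.Walk (f (a+1)) (f (a+d)) := (pathSeg f hadj (a+1) (d-1)).copy rfl e2
  let S : G.Walk (f (a+1)) u := seg2.concat h3.symm
  let R : G.Walk v u := Walk.cons h2 S
  let Q : G.Walk (f (a+d+1)) u := Walk.cons h4.symm R
  let P : G.Walk (f a) u := seg1.reverse.append Q
  let W : G.Walk u u := Walk.cons h1 P
  -- membership facts
  have hmem1 : ∀ x ∈ seg1.support, ∃ t, t ≤ n-1-d ∧ x = f (a + (d+1+t)) := by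
    intro x hx
    simp only [seg1, Walk.support_copy, mem_pathSeg_support] at hx
    obtain ⟨t, ht, rfl⟩ := hx
    exact ⟨t, ht, by rw [show a + (d+1+t) = a+d+1+t by omega]⟩
  have hmem2 : ∀ x ∈ seg2.support, ∃ t, 1 ≤ t ∧ t ≤ d ∧ x = f (a + t) := by
    intro x hx
    simp only [seg2, Walk.support_copy, mem_pathSeg_support] at hx
    obtain ⟨t, ht, rfl⟩ := hx
    exact ⟨t+1, by omega, by omega, by rw [show a + (t+1) = a+1+t by omega]⟩
  have hu1 : u ∉ seg1.support := fun hx => by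
    obtain ⟨t, _, ht⟩ := hmem1 u hx; exact hu _ ht.symm
  have hu2 : u ∉ seg2.support := fun hx => by
    obtain ⟨t, _, _, ht⟩ := hmem2 u hx; exact hu _ ht.symm
  have hv1 : v ∉ seg1.support := fun hx => by
    obtain ⟨t, _, ht⟩ := hmem1 v hx; exact hv _ ht.symm
  have hv2 : v ∉ seg2.support := fun hx => by
    obtain ⟨t, _, _, ht⟩ := hmem2 v hx; exact hv _ ht.symm
  have hWc : W.IsCycle := by
    rw [Walk.cons_isCycle_iff]
    constructor
    · apply Walk.IsPath.mk'
      have hPs : P.support = seg1.support.reverse ++ (v :: (seg2.support ++ [u])) := by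
        simp only [P, Q, R, S, Walk.support_append, Walk.support_reverse, Walk.support_cons,
          Walk.support_concat, List.concat_eq_append, List.tail_cons]
      rw [hPs, List.nodup_append]
      refine ⟨?_, ?_, ?_⟩
      · rw [List.nodup_reverse]
        simpa only [seg1, Walk.support_copy] using
          pathSeg_support_nodup hadj hn hper hinj (a+d+1) (by omega)
      · rw [List.nodup_cons, List.nodup_append]
        refine ⟨?_, ?_, List.nodup_singleton _, ?_⟩
        · rw [List.mem_append, List.mem_singleton]
          rintro (hx | rfl)
          · exact hv2 hx
          · exact huv rfl
        · simpa only [seg2, Walk.support_copy] using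
            pathSeg_support_nodup hadj hn hper hinj (a+1) (by omega)
        · intro x hx y hy hxy
          rw [List.mem_singleton] at hy
          subst hy
          rw [hxy] at hx
          exact hu2 hx
      · intro x hx
        rw [List.mem_reverse] at hx
        obtain ⟨t, ht, rfl⟩ := hmem1 x hx
        intro b hb heqb
        subst heqb
        rw [List.mem_cons, List.mem_append, List.mem_singleton] at hb
        rcases hb with heq | hx2 | heq
        · exact hv _ heq
        · obtain ⟨s, hs1, hs2, heq⟩ := hmem2 _ hx2
          have := f_add_cancel hn hper hinj (a := a) (x := d+1+t) (y := s)
            (by omega) (by omega) heq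
          omega
        · exact hu _ heq
    · intro hmem
      have hPe : P.edges = seg1.edges.reverse ++
          (s(f (a+d+1), v) :: s(v, f (a+1)) :: (seg2.edges ++ [s(f (a+d), u)])) := by
        simp only [P, Q, R, S, Walk.edges_append, Walk.edges_reverse, Walk.edges_cons,
          Walk.edges_concat, List.concat_eq_append]
      rw [hPe, List.mem_append, List.mem_reverse, List.mem_cons, List.mem_cons,
        List.mem_append, List.mem_singleton] at hmem
      rcases hmem with hmem | hmem | hmem | hmem | hmem
      · exact hu1 (Walk.fst_mem_support_of_mem_edges _ hmem)
      · rw [Sym2.eq_iff] at hmem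
        rcases hmem with ⟨hA, hB⟩ | ⟨hA, hB⟩
        · exact hv _ hB
        · exact huv hA
      · rw [Sym2.eq_iff] at hmem
        rcases hmem with ⟨hA, hB⟩ | ⟨hA, hB⟩
        · exact huv hA
        · exact hu _ hA.symm
      · exact hu2 (Walk.fst_mem_support_of_mem_edges _ hmem)
      · rw [Sym2.eq_iff] at hmem
        rcases hmem with ⟨hA, hB⟩ | ⟨hA, hB⟩
        · exact hu _ hA.symm
        · have := f_add_cancel hn hper hinj (a := a) (x := 0) (y := d)
            (by omega) (by omega) (by simpa using hB)
          omega
  have hlen : W.length = n + 2 := by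
    simp [W, P, Q, R, S, seg1, seg2, Walk.length_append, Walk.length_concat]
    omega
  have := hmaxn u W hWc
  omega

include hadj hn hper hinj hu hv hmaxn in
lemma key [DecidableEq V] [DecidableRel G.Adj] :
    2 * ((Finset.range n).filter (fun i => G.Adj u (f i) ∨ G.Adj v (f i))).card - 2 ≤ n := by
  classical
  set T : Finset ℕ := (Finset.range n).filter (fun i => G.Adj u (f i) ∨ G.Adj v (f i)) with hT
  have hTsub : T ⊆ Finset.range n := Finset.filter_subset _ _
  set σ : ℕ → ℕ := fun i => (i+1) % n with hσ
  have hnpos : 0 < n := by omega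
  have hσlt : ∀ i, σ i < n := fun i => Nat.mod_lt _ hnpos
  have hσinj : ∀ i j, i < n → j < n → σ i = σ j → i = j := by
    intro i j hi hj hij
    have h1 : i + 1 ≡ j + 1 [MOD n] := hij
    have h2 : i ≡ j [MOD n] := Nat.ModEq.add_right_cancel' 1 h1
    have := h2
    unfold Nat.ModEq at this
    rwa [Nat.mod_eq_of_lt hi, Nat.mod_eq_of_lt hj] at this
  set T' : Finset ℕ := T.image σ with hT'
  have hT'sub : T' ⊆ Finset.range n := by
    intro x hx
    rw [hT', Finset.mem_image] at hx
    obtain ⟨i, _, rfl⟩ := hx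
    exact Finset.mem_range.2 (hσlt i)
  have hinjT : ∀ s : Finset ℕ, s ⊆ Finset.range n → (s.image σ).card = s.card := by
    intro s hs
    apply Finset.card_image_of_injOn
    intro i hi j hj hij
    exact hσinj i j (Finset.mem_range.1 (hs hi)) (Finset.mem_range.1 (hs hj)) hij
  have hcardT' : T'.card = T.card := hinjT T hTsub
  have hunion : (T ∪ T').card ≤ n := by
    calc (T ∪ T').card ≤ (Finset.range n).card :=
          Finset.card_le_card (Finset.union_subset hTsub hT'sub)
      _ = n := Finset.card_range n
  -- the set of "bad" indices
  set B : Finset ℕ := T.filter (fun i => G.Adj u (f (i+1)) ∨ G.Adj v (f (i+1))) with hB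
  have hfσ : ∀ i, f (σ i) = f (i + 1) := by
    intro i
    rw [hσ]
    exact (f_mod hn hper (i+1)).symm
  have hTT' : T ∩ T' = B.image σ := by
    ext x
    constructor
    · intro hx
      rw [Finset.mem_inter] at hx
      obtain ⟨hx1, hx2⟩ := hx
      rw [hT', Finset.mem_image] at hx2
      obtain ⟨i, hiT, rfl⟩ := hx2
      rw [Finset.mem_image]
      refine ⟨i, ?_, rfl⟩
      rw [hB, Finset.mem_filter]
      refine ⟨hiT, ?_⟩
      rw [hT, Finset.mem_filter] at hx1
      rw [← hfσ i]
      exact hx1.2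
    · intro hx
      rw [Finset.mem_image] at hx
      obtain ⟨i, hiB, rfl⟩ := hx
      rw [hB, Finset.mem_filter] at hiB
      obtain ⟨hiT, hadji⟩ := hiB
      rw [Finset.mem_inter]
      constructor
      · rw [hT, Finset.mem_filter]
        refine ⟨Finset.mem_range.2 (hσlt i), ?_⟩
        rw [hfσ i]
        exact hadji
      · rw [hT', Finset.mem_image]
        exact ⟨i, hiT, rfl⟩
  have hBsub : B ⊆ Finset.range n := fun x hx => hTsub (Finset.mem_filter.1 hx).1
  have hcardTT' : (T ∩ T').card = B.card := by rw [hTT']; exact hinjT B hBsub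
  -- bad indices split into two types, each with at most one element
  set Buv : Finset ℕ := (Finset.range n).filter
    (fun i => G.Adj u (f i) ∧ G.Adj v (f (i+1))) with hBuv
  set Bvu : Finset ℕ := (Finset.range n).filter
    (fun i => G.Adj v (f i) ∧ G.Adj u (f (i+1))) with hBvu
  have hBsplit : B ⊆ Buv ∪ Bvu := by
    intro i hi
    rw [hB, Finset.mem_filter, hT, Finset.mem_filter] at hi
    obtain ⟨⟨hirange, hi1⟩, hi2⟩ := hi
    rw [Finset.mem_union, hBuv, hBvu, Finset.mem_filter, Finset.mem_filter]
    rcases hi1 with hA | hA <;> rcases hi2 with hC | hC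
    · exact absurd hC (fun hC => no_uu hadj hn hper hinj hu hmaxn i hA hC)
    · exact Or.inl ⟨hirange, hA, hC⟩
    · exact Or.inr ⟨hirange, hA, hC⟩
    · exact absurd hC (fun hC => no_uu hadj hn hper hinj hv hmaxn i hA hC)
  have hpair : ∀ (x y : V), x ≠ y → (∀ i, f i ≠ x) → (∀ i, f i ≠ y) →
      ∀ a b : ℕ, a < n → b < n →
      G.Adj x (f a) → G.Adj y (f (a+1)) → G.Adj x (f b) → G.Adj y (f (b+1)) → a = b := by
    intro x y hxy hx hy a b ha hb h1 h2 h3 h4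
    by_contra hne
    have hcase : ∀ a b : ℕ, a < n → b < n → a < b →
        G.Adj x (f a) → G.Adj y (f (a+1)) → G.Adj x (f b) → G.Adj y (f (b+1)) → False := by
      intro a b ha hb hab h1 h2 h3 h4
      have hd1 : 1 ≤ b - a := by omega
      have hd2 : b - a ≤ n - 1 := by omega
      have e3 : a + (b - a) = b := by omega
      have e4 : a + (b - a) + 1 = b + 1 := by omega
      exact no_uvuv hadj hn hper hinj hx hy hmaxn hxy hd1 hd2 h1 h2
        (by rw [e3]; exact h3) (by rw [e4]; exact h4)
    rcases Nat.lt_or_ge a b with h | h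
    · exact hcase a b ha hb h h1 h2 h3 h4
    · exact hcase b a hb ha (by omega) h3 h4 h1 h2
  have hcard_uv : Buv.card ≤ 1 := by
    rw [Finset.card_le_one]
    intro a ha b hb
    rw [hBuv, Finset.mem_filter, Finset.mem_range] at ha hb
    by_cases huv : u = v
    · exfalso
      subst huv
      exact no_uu hadj hn hper hinj hu hmaxn a ha.2.1 ha.2.2
    · exact hpair u v huv hu hv a b ha.1 hb.1 ha.2.1 ha.2.2 hb.2.1 hb.2.2
  have hcard_vu : Bvu.card ≤ 1 := by
    rw [Finset.card_le_one]
    intro a ha b hb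
    rw [hBvu, Finset.mem_filter, Finset.mem_range] at ha hb
    by_cases huv : u = v
    · exfalso
      subst huv
      exact no_uu hadj hn hper hinj hu hmaxn a ha.2.1 ha.2.2
    · exact hpair v u (fun h => huv h.symm) hv hu a b ha.1 hb.1 ha.2.1 ha.2.2 hb.2.1 hb.2.2
  have hcardB : B.card ≤ 2 := by
    calc B.card ≤ (Buv ∪ Bvu).card := Finset.card_le_card hBsplit
      _ ≤ Buv.card + Bvu.card := Finset.card_union_le _ _
      _ ≤ 2 := by omega
  have hmain := Finset.card_union_add_card_inter T T'
  omega

end CycleAux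


lemma getElem_congr_idx' {α : Type*} {l : List α} {i j : ℕ} (hij : i = j) (hi : i < l.length) :
    l[i]'hi = l[j]'(hij ▸ hi) := by subst hij; rfl

theorem stmt_4 {V : Type*} [Fintype V] [DecidableEq V] (G : SimpleGraph V) [DecidableRel G.Adj]
    (w : V) (c : G.Walk w w) (hc : c.IsCycle)
    (hmax : ∀ (x : V) (c' : G.Walk x x), c'.IsCycle → c'.length ≤ c.length)
    (u v : V) (hu : u ∉ c.support) (hv : v ∉ c.support) :
    2 * ((c.support.toFinset.filter (fun y => G.Adj u y)) ∪
          (c.support.toFinset.filter (fun y => G.Adj v y))).card - 2 ≤ c.length := by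
  classical
  set n := c.length with hndef
  have hn3 : 3 ≤ n := hc.three_le_length
  have hlen : c.support.length = n + 1 := by rw [Walk.length_support]
  set g : ℕ → V := fun k => c.support.getD k w with hgdef
  set f : ℕ → V := fun i => g (i % n) with hf
  have hg : ∀ k, (h : k < n + 1) → g k = c.support[k]'(by rw [hlen]; omega) :=
    fun k h => List.getD_eq_getElem _ _ _
  have hgetn : c.support[n]'(by rw [hlen]; omega) = w := by
    have h1 := c.getLast_support
    rw [List.getLast_eq_getElem] at h1
    rw [getElem_congr_idx' (show n = c.support.length - 1 by omega)]
    exact h1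
  have hget0 : c.support[0]'(by rw [hlen]; omega) = w := by
    rw [← hg 0 (by omega)]
    show c.support.getD 0 w = w
    rw [c.support_eq_cons]
    rfl
  have htail : c.support.tail.Nodup := hc.support_nodup
  have htlen : c.support.tail.length = n := by simp [List.length_tail, hlen]
  have htne : c.support.tail ≠ [] := by
    intro h
    rw [h] at htlen
    simp at htlen
    omega
  have htlast : c.support.tail.getLast htne = w := by
    rw [List.getLast_eq_getElem, List.getElem_tail,
      getElem_congr_idx' (show c.support.tail.length - 1 + 1 = n by omega)]
    exact hgetn
  have hdl : c.support.dropLast.Nodup := by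
    rw [c.support_eq_cons, List.dropLast_cons_of_ne_nil htne, List.nodup_cons]
    constructor
    · intro hw
      have h2 := htail
      conv at h2 => rw [← List.dropLast_append_getLast htne]
      rw [List.nodup_append] at h2
      exact h2.2.2 w hw w (by rw [htlast]; exact List.mem_singleton.2 rfl) rfl
    · exact (List.dropLast_sublist _).nodup htail
  have hdlen : c.support.dropLast.length = n := by
    simp [List.length_dropLast, hlen]
  have hinj : ∀ i j, (hi : i < n) → (hj : j < n) →
      c.support[i]'(by rw [hlen]; omega) = c.support[j]'(by rw [hlen]; omega) → i = j := by
    intro i j hi hj hij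
    rw [← List.getElem_dropLast (xs := c.support) (i := i) (by rw [hdlen]; exact hi),
        ← List.getElem_dropLast (xs := c.support) (i := j) (by rw [hdlen]; exact hj)] at hij
    rw [List.nodup_iff_injective_get] at hdl
    have := hdl (a₁ := ⟨i, by rw [hdlen]; exact hi⟩) (a₂ := ⟨j, by rw [hdlen]; exact hj⟩)
      (by simpa using hij)
    simpa using this
  have hfinj : ∀ i j, i < n → j < n → f i = f j → i = j := by
    intro i j hi hj hij
    rw [hf] at hij
    simp only at hij
    rw [Nat.mod_eq_of_lt hi, Nat.mod_eq_of_lt hj, hg i (by omega), hg j (by omega)] at hij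
    exact hinj i j hi hj hij
  have hper : ∀ i, f (i + n) = f i := by
    intro i
    simp only [hf, Nat.add_mod_right]
  have hadj : ∀ i, G.Adj (f i) (f (i+1)) := by
    intro i
    have hchain := c.isChain_adj_support
    rw [List.isChain_iff_getElem] at hchain
    have hk : i % n < n := Nat.mod_lt _ (by omega)
    have hmm : (i+1) % n = (i % n + 1) % n := by
      conv_lhs => rw [Nat.add_mod]
      rw [Nat.mod_eq_of_lt (show (1:ℕ) < n by omega)]
    rcases Nat.lt_or_ge (i % n + 1) n with h | h
    · have h2 : (i+1) % n = i % n + 1 := by rw [hmm, Nat.mod_eq_of_lt h]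
      show G.Adj (g (i % n)) (g ((i+1) % n))
      rw [h2, hg _ (by omega), hg _ (by omega)]
      have h3 := hchain (i % n) (by rw [hlen]; omega)
      simpa using h3
    · have hkn : i % n = n - 1 := by omega
      have h2 : (i+1) % n = 0 := by rw [hmm, hkn, show n - 1 + 1 = n by omega, Nat.mod_self]
      show G.Adj (g (i % n)) (g ((i+1) % n))
      rw [h2, hkn, hg _ (by omega), hg _ (by omega)]
      have h3 := hchain (n-1) (by rw [hlen]; omega)
      have h4 : c.support[n-1+1]'(by rw [hlen]; omega) = w := by
        rw [getElem_congr_idx' (l := c.support) (show n - 1 + 1 = n by omega)]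
        exact hgetn
      rw [h4] at h3
      rwa [hget0]
  have hmem : ∀ i, f i ∈ c.support := by
    intro i
    show g (i % n) ∈ c.support
    rw [hg _ (by have := Nat.mod_lt i (show 0 < n by omega); omega)]
    exact List.getElem_mem _
  have hu' : ∀ i, f i ≠ u := fun i h => hu (h ▸ hmem i)
  have hv' : ∀ i, f i ≠ v := fun i h => hv (h ▸ hmem i)
  have hkey := CycleAux.key hadj hn3 hper hfinj hu' hv' hmax (u := u) (v := v)
  have hsupp_iff : ∀ x, x ∈ c.support ↔ ∃ i, i < n ∧ f i = x := by
    intro x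
    constructor
    · intro hx
      rw [List.mem_iff_get] at hx
      obtain ⟨⟨k, hk⟩, rfl⟩ := hx
      simp only [List.get_eq_getElem]
      rcases Nat.lt_or_ge k n with h | h
      · refine ⟨k, h, ?_⟩
        show g (k % n) = _
        rw [Nat.mod_eq_of_lt h, hg k (by omega)]
      · have hkn : k = n := by rw [hlen] at hk; omega
        refine ⟨0, by omega, ?_⟩
        show g (0 % n) = _
        rw [Nat.zero_mod, hg 0 (by omega), hget0,
          getElem_congr_idx' (l := c.support) (show k = n from hkn), hgetn]
    · rintro ⟨i, hi, rfl⟩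
      exact hmem i
  set T : Finset ℕ := (Finset.range n).filter (fun i => G.Adj u (f i) ∨ G.Adj v (f i)) with hT
  have hFT : (c.support.toFinset.filter (fun y => G.Adj u y)) ∪
      (c.support.toFinset.filter (fun y => G.Adj v y)) = T.image f := by
    ext x
    rw [Finset.mem_union, Finset.mem_filter, Finset.mem_filter, Finset.mem_image,
      List.mem_toFinset]
    constructor
    · rintro (⟨hxs, hx⟩ | ⟨hxs, hx⟩) <;>
        obtain ⟨i, hi, rfl⟩ := (hsupp_iff x).1 hxs
      · exact ⟨i, Finset.mem_filter.2 ⟨Finset.mem_range.2 hi, Or.inl hx⟩, rfl⟩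
      · exact ⟨i, Finset.mem_filter.2 ⟨Finset.mem_range.2 hi, Or.inr hx⟩, rfl⟩
    · rintro ⟨i, hiT, rfl⟩
      rw [hT, Finset.mem_filter, Finset.mem_range] at hiT
      rcases hiT.2 with h | h
      · exact Or.inl ⟨hmem i, h⟩
      · exact Or.inr ⟨hmem i, h⟩
  have hcard : ((c.support.toFinset.filter (fun y => G.Adj u y)) ∪
      (c.support.toFinset.filter (fun y => G.Adj v y))).card = T.card := by
    rw [hFT]
    apply Finset.card_image_of_injOn
    intro i hi j hj hij
    rw [hT] at hi hj
    exact hfinj i j (Finset.mem_range.1 (Finset.mem_filter.1 hi).1)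
      (Finset.mem_range.1 (Finset.mem_filter.1 hj).1) hij
  rw [hcard]
  exact hkey
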